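/- Let s,ℓ,c be positive integers with c+ℓ=s and n=3s-ℓ=2ℓ+3c. Let F ⊆ 2^[n] be a shifted up-set containing no 1-element sets, and let d(F) = d with d ≤ 2c. Then either |2^[n] \ P'(s,ℓ)| − (y_F(0)+y_F(1)+y_F(2)) ≤ (4ℓ+d−3)d/2, or |2^[n] \ P(s,ℓ)| − (y_F(0)+y_F(1)+y_F(2)) ≤ (2ℓ+6c−⌈d/2⌉+1)⌈d/2⌉/2. -/

import Mathlib

open Finset

/-- The ground set `[n] = {1, 2, …, n}`. -/
def ground (n : ℕ) : Finset ℕ := Finset.Icc 1 n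

-- The matching number `ν(F)` of a family: the size of the largest pairwise
-- disjoint subfamily of `F`.
open Classical in
noncomputable def matchingNumber (F : Finset (Finset ℕ)) : ℕ :=
  (F.powerset.filter fun M : Finset (Finset ℕ) =>
      (M : Set (Finset ℕ)).Pairwise fun A B => Disjoint A B).sup Finset.card

-- `e(n, s)`: the maximum size of a family `F ⊆ 2^[n]` with `ν(F) < s`.
open Classical in
noncomputable def extremalNumber (n s : ℕ) : ℕ :=
  (((ground n).powerset.powerset).filter fun F => matchingNumber F < s).sup Finset.card

/-- The family `P(s, ℓ) = {P ⊆ [n] : |P| + |P ∩ [ℓ-1]| ≥ 3}` (it depends only on `n, ℓ`). -/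
def famP (n l : ℕ) : Finset (Finset ℕ) :=
  (ground n).powerset.filter fun A => 3 ≤ A.card + (A ∩ Finset.Icc 1 (l - 1)).card

/-- The family `P'(s, ℓ)`: all subsets of `[n]` of size at least `3` together with
all `2`-element subsets of `[2ℓ-1]`. -/
def famP' (n l : ℕ) : Finset (Finset ℕ) :=
  ((ground n).powerset.filter fun A => 3 ≤ A.card) ∪
    (Finset.Icc 1 (2 * l - 1)).powersetCard 2

/-- The family `Q(s, ℓ)`: all subsets of `[n]` of size at least `3` together with all
`2`-element subsets of `[s+ℓ-1]`, with all `3`-element subsets of `[s+ℓ, n]` removed. -/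
def famQ (n s l : ℕ) : Finset (Finset ℕ) :=
  (((ground n).powerset.filter fun A => 3 ≤ A.card) ∪
      (Finset.Icc 1 (s + l - 1)).powersetCard 2) \
    (Finset.Icc (s + l) n).powersetCard 3

/-- The family `W(s, ℓ) = {P ⊆ [n] : |P ∩ [2s-1]| ≥ 2}`. -/
def famW (n s : ℕ) : Finset (Finset ℕ) :=
  (ground n).powerset.filter fun A => 2 ≤ (A ∩ Finset.Icc 1 (2 * s - 1)).card

/-- The `(i ← j)`-shift of a set. -/
def shiftSet (i j : ℕ) (A : Finset ℕ) : Finset ℕ :=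
  if j ∈ A ∧ i ∉ A then insert i (A.erase j) else A

/-- The `(i ← j)`-shift of a family. -/
def shiftFam (i j : ℕ) (F : Finset (Finset ℕ)) : Finset (Finset ℕ) :=
  F.image (shiftSet i j) ∪ F.filter fun A => shiftSet i j A ∈ F

/-- A family `F ⊆ 2^[n]` is shifted if it is invariant under all `(i ← j)`-shifts
with `1 ≤ i < j ≤ n`. -/
def IsShifted (n : ℕ) (F : Finset (Finset ℕ)) : Prop :=
  ∀ i j : ℕ, 1 ≤ i → i < j → j ≤ n → shiftFam i j F = F

/-- `A` can be shifted to `B`: some sequence of `(a ← b)`-shifts with `a < b`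
transforms `A` into `B`. -/
def ShiftsTo (n : ℕ) (A B : Finset ℕ) : Prop :=
  Relation.ReflTransGen
    (fun X Y => ∃ a b : ℕ, 1 ≤ a ∧ a < b ∧ b ≤ n ∧ Y = shiftSet a b X) A B

/-- A family `F ⊆ 2^[n]` is an up-set if it is closed under supersets inside `[n]`. -/
def IsUpSet (n : ℕ) (F : Finset (Finset ℕ)) : Prop :=
  ∀ A ∈ F, ∀ B : Finset ℕ, A ⊆ B → B ⊆ ground n → B ∈ F

/-- The `k`-th layer of a family: its `k`-element members (as subsets of `[n]`). -/
def layer (n : ℕ) (F : Finset (Finset ℕ)) (k : ℕ) : Finset (Finset ℕ) :=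
  F ∩ (ground n).powersetCard k

/-- `y_F(k)`: the number of `k`-element subsets of `[n]` that do not belong to `F`. -/
def yF (n : ℕ) (F : Finset (Finset ℕ)) (k : ℕ) : ℕ :=
  Nat.choose n k - (layer n F k).card

/-- The defining condition for `d(F)` (with parameter `ℓ`). -/
def DCond (l : ℕ) (F : Finset (Finset ℕ)) (d : ℕ) : Prop :=
  (Even d ∧ ∃ i ∈ Finset.Icc 1 (l + d / 2), ({i, 2 * l + d + 1 - i} : Finset ℕ) ∉ F) ∨
  (Odd d ∧ (({1, 2 * l + d} : Finset ℕ) ∉ F ∨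
    ∃ i ∈ Finset.Icc 3 (l + (d + 1) / 2), ({i, 2 * l + d + 2 - i} : Finset ℕ) ∉ F))

/-- `d(F)`: the smallest `d ≥ 0` satisfying the condition `DCond ℓ F d`. -/
noncomputable def dF (l : ℕ) (F : Finset (Finset ℕ)) : ℕ := sInf {d : ℕ | DCond l F d}

lemma mem_shift {n i j : ℕ} {F : Finset (Finset ℕ)} (hsh : IsShifted n F)
    {A : Finset ℕ} (hA : A ∈ F) (hi : 1 ≤ i) (hij : i < j) (hjn : j ≤ n) :
    shiftSet i j A ∈ F := by
  have := hsh i j hi hij hjn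
  rw [← this, shiftFam]
  exact Finset.mem_union_left _ (Finset.mem_image_of_mem _ hA)

lemma pair_shift {n i a b t : ℕ} {F : Finset (Finset ℕ)} (hsh : IsShifted n F)
    (hi : 1 ≤ i) (hia : i ≤ a) (hab : a < b) (htb : t ≤ b) (hit : i < t)
    (hbn : b ≤ n) (hmem : ({a, b} : Finset ℕ) ∈ F) : ({i, t} : Finset ℕ) ∈ F := by
  have hib : ({i, b} : Finset ℕ) ∈ F := by
    rcases eq_or_lt_of_le hia with h | h
    · subst h; exact hmem
    · have := mem_shift hsh hmem hi h (le_trans (le_of_lt hab) hbn)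
      rwa [shiftSet, if_pos ⟨by simp, by simp; omega⟩,
        show ({a,b} : Finset ℕ).erase a = {b} by
          ext x; simp; omega] at this
  rcases eq_or_lt_of_le htb with h | h
  · subst h; exact hib
  · have := mem_shift hsh hib (by omega) h hbn
    rwa [shiftSet, if_pos ⟨by simp, by simp; omega⟩,
      show ({i,b} : Finset ℕ).erase b = {i} by
        ext x; simp; omega,
      show insert t ({i} : Finset ℕ) = {i, t} by rw [Finset.pair_comm]] at this
lemma layer2_bound {n i t : ℕ} {F : Finset (Finset ℕ)} (hF : ∀ A ∈ F, A ⊆ ground n)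
    (hsh : IsShifted n F) (hi : 1 ≤ i) (hit : i < t)
    (hnot : ({i, t} : Finset ℕ) ∉ F) :
    (layer n F 2).card ≤ Nat.choose (t - 1) 2 + (i - 1) * (n + 1 - t) := by
  have key : ∀ a b : ℕ, a < b → ({a,b} : Finset ℕ) ∈ F →
      ({a,b} : Finset ℕ) ⊆ ground n →
      ({a,b} : Finset ℕ) ∈ (Finset.Icc 1 (t-1)).powersetCard 2 ∪
        ((Finset.Icc 1 (i-1)) ×ˢ (Finset.Icc t n)).image
          (fun p => ({p.1, p.2} : Finset ℕ)) := by
    intro a b h hAF hAg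
    have ha : a ∈ ground n := hAg (by simp)
    have hb : b ∈ ground n := hAg (by simp)
    rw [ground, Finset.mem_Icc] at ha hb
    by_cases hbt : b < t
    · apply Finset.mem_union_left
      rw [Finset.mem_powersetCard]
      refine ⟨?_, Finset.card_pair h.ne⟩
      intro x hx
      simp only [Finset.mem_insert, Finset.mem_singleton] at hx
      rw [Finset.mem_Icc]; rcases hx with rfl | rfl <;> omega
    · push_neg at hbt
      have hai : a < i := by
        by_contra hc
        push_neg at hc
        exact hnot (pair_shift hsh hi hc h hbt hit hb.2 hAF)
      apply Finset.mem_union_right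
      apply Finset.mem_image.mpr
      exact ⟨(a, b), by rw [Finset.mem_product]; simp only [Finset.mem_Icc]; omega, rfl⟩
  have hsub : layer n F 2 ⊆ (Finset.Icc 1 (t-1)).powersetCard 2 ∪
      ((Finset.Icc 1 (i-1)) ×ˢ (Finset.Icc t n)).image (fun p => ({p.1, p.2} : Finset ℕ)) := by
    intro A hA
    rw [layer, Finset.mem_inter, Finset.mem_powersetCard] at hA
    obtain ⟨hAF, hAg, hA2⟩ := hA
    obtain ⟨a, b, hab, rfl⟩ := Finset.card_eq_two.mp hA2
    rcases lt_or_gt_of_ne hab with h | h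
    · exact key a b h hAF hAg
    · rw [Finset.pair_comm]
      exact key b a h (by rwa [Finset.pair_comm] at hAF) (by rwa [Finset.pair_comm] at hAg)
  calc (layer n F 2).card ≤ _ := Finset.card_le_card hsub
    _ ≤ ((Finset.Icc 1 (t-1)).powersetCard 2).card +
        (((Finset.Icc 1 (i-1)) ×ˢ (Finset.Icc t n)).image
          (fun p => ({p.1, p.2} : Finset ℕ))).card := Finset.card_union_le _ _
    _ ≤ Nat.choose (t - 1) 2 + (i - 1) * (n + 1 - t) := by
        apply Nat.add_le_add
        · rw [Finset.card_powersetCard, Nat.card_Icc]; simp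
        · calc _ ≤ ((Finset.Icc 1 (i-1)) ×ˢ (Finset.Icc t n)).card := Finset.card_image_le
            _ = (i - 1) * (n + 1 - t) := by rw [Finset.card_product, Nat.card_Icc, Nat.card_Icc]; simp
lemma two_mul_choose_two (m : ℕ) : 2 * Nat.choose m 2 = m * (m - 1) := by
  rw [Nat.choose_two_right, Nat.mul_div_cancel']
  rcases Nat.even_or_odd m with h | h
  · exact h.two_dvd.mul_right _
  · have : Even (m - 1) := by
      rcases h with ⟨k, hk⟩; exact ⟨k, by omega⟩
    exact Dvd.dvd.mul_left this.two_dvd m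

lemma card_ground (n : ℕ) : (ground n).card = n := by
  rw [ground, Nat.card_Icc]; omega

lemma card_le_two (n : ℕ) :
    ((ground n).powerset.filter fun A => A.card ≤ 2).card = 1 + n + Nat.choose n 2 := by
  have heq : ((ground n).powerset.filter fun A => A.card ≤ 2) =
      ((ground n).powersetCard 0 ∪ (ground n).powersetCard 1) ∪ (ground n).powersetCard 2 := by
    ext A
    simp only [Finset.mem_filter, Finset.mem_powerset, Finset.mem_union,
      Finset.mem_powersetCard]
    constructor
    · rintro ⟨h, hc⟩
      have : A.card = 0 ∨ A.card = 1 ∨ A.card = 2 := by omega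
      tauto
    · rintro ((⟨h, hc⟩ | ⟨h, hc⟩) | ⟨h, hc⟩) <;> exact ⟨h, by omega⟩
  rw [heq, Finset.card_union_of_disjoint, Finset.card_union_of_disjoint]
  · simp [Finset.card_powersetCard, card_ground]
  · rw [Finset.disjoint_left]
    intro A h1 h2
    rw [Finset.mem_powersetCard] at h1 h2; omega
  · rw [Finset.disjoint_left]
    intro A h1 h2
    rw [Finset.mem_union, Finset.mem_powersetCard, Finset.mem_powersetCard] at h1
    rw [Finset.mem_powersetCard] at h2
    rcases h1 with h1 | h1 <;> omega
lemma card_compl_P' (n l : ℕ) (hl : 1 ≤ l) (hln : 2*l - 1 ≤ n) :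
    ((ground n).powerset \ famP' n l).card + Nat.choose (2*l-1) 2
      = 1 + n + Nat.choose n 2 := by
  have hsub : (Finset.Icc 1 (2*l-1)).powersetCard 2 ⊆
      ((ground n).powerset.filter fun A => A.card ≤ 2) := by
    intro A hA
    rw [Finset.mem_powersetCard] at hA
    rw [Finset.mem_filter, Finset.mem_powerset]
    exact ⟨hA.1.trans (Finset.Icc_subset_Icc le_rfl hln), by omega⟩
  have heq : (ground n).powerset \ famP' n l =
      ((ground n).powerset.filter fun A => A.card ≤ 2) \
        (Finset.Icc 1 (2*l-1)).powersetCard 2 := by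
    ext A
    simp only [Finset.mem_sdiff, famP', Finset.mem_union, Finset.mem_filter,
      Finset.mem_powerset, not_or]
    constructor
    · rintro ⟨h, h2, h3⟩
      have hc : ¬ 3 ≤ A.card := fun hh => h2 ⟨h, hh⟩
      exact ⟨⟨h, by omega⟩, h3⟩
    · rintro ⟨⟨h, hc⟩, h3⟩
      exact ⟨h, by push_neg; intro; omega, h3⟩
  rw [heq, Finset.card_sdiff_of_subset hsub, Finset.card_powersetCard, Nat.card_Icc]
  have h1 := Finset.card_le_card hsub
  rw [Finset.card_powersetCard, Nat.card_Icc] at h1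
  have hval := card_le_two n
  have h2 : 2*l-1+1-1 = 2*l-1 := by omega
  rw [h2] at h1 ⊢
  omega

lemma card_compl_P (n l : ℕ) (hl : 1 ≤ l) (hln : l ≤ n) :
    ((ground n).powerset \ famP n l).card = 1 + n + Nat.choose (n+1-l) 2 := by
  have heq : (ground n).powerset \ famP n l =
      ((ground n).powersetCard 0 ∪ (ground n).powersetCard 1) ∪
        (Finset.Icc l n).powersetCard 2 := by
    ext A
    simp only [Finset.mem_sdiff, famP, Finset.mem_filter, Finset.mem_powerset,
      Finset.mem_union, Finset.mem_powersetCard, not_and]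
    constructor
    · rintro ⟨h, h2⟩
      have hc : ¬ 3 ≤ A.card + (A ∩ Finset.Icc 1 (l-1)).card := fun hh => h2 h hh
      push_neg at hc
      have hcard : A.card ≤ 2 := by omega
      rcases Nat.lt_or_ge A.card 2 with h3 | h3
      · left
        have : A.card = 0 ∨ A.card = 1 := by omega
        tauto
      · right
        have h4 : A.card = 2 := by omega
        refine ⟨fun x hx => ?_, h4⟩
        have hx1 := h hx
        rw [ground, Finset.mem_Icc] at hx1
        rw [Finset.mem_Icc]
        refine ⟨?_, hx1.2⟩
        by_contra hxl
        push_neg at hxl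
        have : x ∈ A ∩ Finset.Icc 1 (l-1) := by
          rw [Finset.mem_inter, Finset.mem_Icc]; exact ⟨hx, hx1.1, by omega⟩
        have : 1 ≤ (A ∩ Finset.Icc 1 (l-1)).card := Finset.card_pos.mpr ⟨x, this⟩
        omega
    · rintro ((⟨h, hc⟩ | ⟨h, hc⟩) | ⟨h, hc⟩)
      · refine ⟨h, fun _ hh => ?_⟩
        have : (A ∩ Finset.Icc 1 (l-1)).card ≤ A.card :=
          Finset.card_le_card Finset.inter_subset_left
        omega
      · refine ⟨h, fun _ hh => ?_⟩
        have : (A ∩ Finset.Icc 1 (l-1)).card ≤ A.card :=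
          Finset.card_le_card Finset.inter_subset_left
        omega
      · refine ⟨h.trans (Finset.Icc_subset_Icc hl le_rfl), fun _ hh => ?_⟩
        have hempty : A ∩ Finset.Icc 1 (l-1) = ∅ := by
          rw [Finset.eq_empty_iff_forall_notMem]
          intro x hx
          rw [Finset.mem_inter, Finset.mem_Icc] at hx
          have := h hx.1
          rw [Finset.mem_Icc] at this
          omega
        rw [hempty] at hh
        simp at hh
        omega
  rw [heq, Finset.card_union_of_disjoint, Finset.card_union_of_disjoint]
  · simp only [Finset.card_powersetCard, card_ground, Nat.card_Icc]
    simp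
  · rw [Finset.disjoint_left]
    intro A h1 h2
    rw [Finset.mem_powersetCard] at h1 h2; omega
  · rw [Finset.disjoint_left]
    intro A h1 h2
    rw [Finset.mem_union, Finset.mem_powersetCard, Finset.mem_powersetCard] at h1
    rw [Finset.mem_powersetCard] at h2
    rcases h1 with h1 | h1 <;> omega

lemma convex_bound (l c e i lo L : ℤ) (hlo : 1 ≤ lo) (hil : lo ≤ i) (hir : i ≤ l + e)
    (hb : 2*L ≤ (2*l+2*e-i)*(2*l+2*e-i-1) + 2*(i-1)*(3*c-2*e+i)) :
    2*L ≤ (2*l+2*e-lo)*(2*l+2*e-lo-1) + 2*(lo-1)*(3*c-2*e+lo) ∨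
    2*L ≤ (2*l+3*c)*(2*l+3*c-1) - (l+3*c+1-e)*(l+3*c-e) := by
  set T2 : ℤ := (2*l+3*c)*(2*l+3*c-1) - (l+3*c+1-e)*(l+3*c-e) with hT2
  by_cases hT : 2*L ≤ T2
  · exact Or.inr hT
  · left
    push_neg at hT
    have hfhi : (2*l+2*e-(l+e))*(2*l+2*e-(l+e)-1) + 2*((l+e)-1)*(3*c-2*e+(l+e)) = T2 := by
      rw [hT2]; ring
    rcases eq_or_lt_of_le hir with h | h
    · exfalso; rw [← h] at hfhi; linarith
    · nlinarith [mul_nonneg (mul_nonneg (by linarith : (0:ℤ) ≤ l + e - lo)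
          (by linarith : (0:ℤ) ≤ i - lo)) (by linarith : (0:ℤ) ≤ l + e - i),
        mul_nonneg (by linarith : (0:ℤ) ≤ i - lo)
          (by linarith : (0:ℤ) ≤ (2*l+2*e-i)*(2*l+2*e-i-1) + 2*(i-1)*(3*c-2*e+i) - T2),
        mul_pos (by linarith : (0:ℤ) < l + e - i)
          (by linarith : (0:ℤ) < 2*L - T2)]

lemma f3_dichot (l c e : ℤ) (hl : 1 ≤ l) (hc : 1 ≤ c) (he : 1 ≤ e) (hec : e ≤ c)
    (h3 : 3 ≤ l + e) :
    (2*l+2*e-3)*(2*l+2*e-3-1) + 2*(3-1)*(3*c-2*e+3) ≤ (2*l+2*e-2)*(2*l+2*e-3) ∨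
    (2*l+2*e-3)*(2*l+2*e-3-1) + 2*(3-1)*(3*c-2*e+3) ≤
      (2*l+3*c)*(2*l+3*c-1) - (l+3*c+1-e)*(l+3*c-e) := by
  by_cases h : 12*c-4*l-12*e+18 ≤ 0
  · left; nlinarith
  · right
    push_neg at h
    have h4 : 0 ≤ 6*c-2*l-6*e+8 := by omega
    nlinarith [mul_nonneg (by linarith : (0:ℤ) ≤ l+e-3) h4,
      mul_nonneg (by linarith : (0:ℤ) ≤ l+e) (by linarith : (0:ℤ) ≤ l+e-3)]

set_option maxHeartbeats 2000000 in
theorem stmt_10 (n s l c d : ℕ) (hs0 : 0 < s) (hl0 : 0 < l) (hc0 : 0 < c)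
    (hcl : c + l = s) (hn : n = 2 * l + 3 * c)
    (F : Finset (Finset ℕ)) (hF : ∀ A ∈ F, A ⊆ ground n) (hsh : IsShifted n F)
    (hup : IsUpSet n F) (h1 : ∀ A ∈ F, A.card ≠ 1)
    (hdF : dF l F = d) (hd2c : d ≤ 2 * c) :
    2 * ((((ground n).powerset \ famP' n l).card : ℤ)
          - ((yF n F 0 + yF n F 1 + yF n F 2 : ℕ) : ℤ))
        ≤ (4 * (l : ℤ) + (d : ℤ) - 3) * (d : ℤ) ∨
    2 * ((((ground n).powerset \ famP n l).card : ℤ)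
          - ((yF n F 0 + yF n F 1 + yF n F 2 : ℕ) : ℤ))
        ≤ (2 * (l : ℤ) + 6 * (c : ℤ) - ((d : ℤ) + 1) / 2 + 1) * (((d : ℤ) + 1) / 2) := by
  have hempty : (∅ : Finset ℕ) ∉ F := by
    intro h
    exact h1 {1} (hup ∅ h {1} (Finset.empty_subset _)
      (by rw [Finset.singleton_subset_iff, ground, Finset.mem_Icc]; omega))
      (Finset.card_singleton 1)
  have hlay0 : layer n F 0 = ∅ := by
    rw [Finset.eq_empty_iff_forall_notMem]
    intro A hA
    rw [layer, Finset.mem_inter, Finset.mem_powersetCard] at hA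
    exact hempty ((Finset.card_eq_zero.mp hA.2.2) ▸ hA.1)
  have hlay1 : layer n F 1 = ∅ := by
    rw [Finset.eq_empty_iff_forall_notMem]
    intro A hA
    rw [layer, Finset.mem_inter, Finset.mem_powersetCard] at hA
    exact h1 A hA.1 hA.2.2
  set L := (layer n F 2).card with hLdef
  have hL2 : L ≤ Nat.choose n 2 := by
    have hs : layer n F 2 ⊆ (ground n).powersetCard 2 := Finset.inter_subset_right
    have := Finset.card_le_card hs
    rwa [Finset.card_powersetCard, card_ground] at this
  have hy : yF n F 0 + yF n F 1 + yF n F 2 = 1 + n + (Nat.choose n 2 - L) := by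
    rw [yF, yF, yF, hlay0, hlay1]
    simp [Nat.choose_one_right, hLdef]
  have hcP' := card_compl_P' n l (by omega) (by omega)
  have hcP := card_compl_P n l (by omega) (by omega)
  have gP' : ((((ground n).powerset \ famP' n l).card : ℕ) : ℤ)
      = 1 + n + ((Nat.choose n 2 : ℕ) : ℤ) - ((Nat.choose (2*l-1) 2 : ℕ) : ℤ) := by
    omega
  have gP : ((((ground n).powerset \ famP n l).card : ℕ) : ℤ)
      = 1 + n + ((Nat.choose (n+1-l) 2 : ℕ) : ℤ) := by omega
  have gy : ((yF n F 0 + yF n F 1 + yF n F 2 : ℕ) : ℤ)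
      = 1 + n + ((Nat.choose n 2 : ℕ) : ℤ) - (L : ℤ) := by omega
  have gch1 : 2*((Nat.choose (2*l-1) 2 : ℕ) : ℤ) = (2*(l:ℤ)-1)*(2*(l:ℤ)-2) := by
    have h := congrArg (Nat.cast : ℕ → ℤ) (two_mul_choose_two (2*l-1))
    push_cast at h
    rw [show ((2*l-1 : ℕ) : ℤ) = 2*(l:ℤ)-1 by omega,
      show ((2*l-1-1 : ℕ) : ℤ) = 2*(l:ℤ)-2 by omega] at h
    linarith
  have gch2 : 2*((Nat.choose n 2 : ℕ) : ℤ) = (n:ℤ)*((n:ℤ)-1) := by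
    have h := congrArg (Nat.cast : ℕ → ℤ) (two_mul_choose_two n)
    push_cast at h
    rw [show ((n-1 : ℕ) : ℤ) = (n:ℤ)-1 by omega] at h
    linarith
  have gch3 : 2*((Nat.choose (n+1-l) 2 : ℕ) : ℤ) = ((n:ℤ)+1-l)*((n:ℤ)-l) := by
    have h := congrArg (Nat.cast : ℕ → ℤ) (two_mul_choose_two (n+1-l))
    push_cast at h
    rw [show ((n+1-l : ℕ) : ℤ) = (n:ℤ)+1-(l:ℤ) by omega,
      show ((n+1-l-1 : ℕ) : ℤ) = (n:ℤ)-(l:ℤ) by omega] at h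
    linarith
  have hnz : (n:ℤ) = 2*(l:ℤ)+3*(c:ℤ) := by omega
  have hne : {d' : ℕ | DCond l F d'}.Nonempty := by
    refine ⟨4*c, Or.inl ⟨⟨2*c, by omega⟩, 1, ?_, ?_⟩⟩
    · rw [Finset.mem_Icc]; omega
    · intro hmem
      have h2 : 2*l+4*c+1-1 ∈ ground n := hF _ hmem (by simp)
      rw [ground, Finset.mem_Icc] at h2
      omega
  have hd : DCond l F d := by
    have := Nat.sInf_mem hne
    rwa [← dF, hdF] at this
  rcases hd with ⟨⟨e0, he0⟩, i, hiIcc, hnot⟩ | ⟨hodd, hcase⟩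
  · -- even case
    rw [Finset.mem_Icc] at hiIcc
    have hie : i ≤ l + e0 := by omega
    have hit : i < 2*l+d+1-i := by omega
    have hbound := layer2_bound hF hsh hiIcc.1 hit hnot
    have hch := two_mul_choose_two (2*l+d+1-i-1)
    have h2 : 2*L ≤ (2*l+d+1-i-1)*(2*l+d+1-i-1-1)
        + 2*((i-1)*(n+1-(2*l+d+1-i))) := by omega
    have h3 := (Nat.cast_le (α := ℤ)).mpr h2
    push_cast at h3
    rw [show ((2*l+d+1-i-1 : ℕ) : ℤ) = 2*(l:ℤ)+2*(e0:ℤ)-(i:ℤ) by omega,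
      show ((2*l+d+1-i-1-1 : ℕ) : ℤ) = 2*(l:ℤ)+2*(e0:ℤ)-(i:ℤ)-1 by omega,
      show ((i-1 : ℕ) : ℤ) = (i:ℤ)-1 by omega,
      show ((n+1-(2*l+d+1-i) : ℕ) : ℤ) = 3*(c:ℤ)-2*(e0:ℤ)+(i:ℤ) by omega] at h3
    have hdisj := convex_bound (l:ℤ) (c:ℤ) (e0:ℤ) (i:ℤ) 1 (L:ℤ) le_rfl
      (by exact_mod_cast hiIcc.1) (by exact_mod_cast hie) (by linarith)
    have hdz : (d:ℤ) = 2*(e0:ℤ) := by omega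
    have hE : ((d:ℤ)+1)/2 = (e0:ℤ) := by omega
    rcases hdisj with hleft | hright
    · left
      rw [gP', gy, hdz]
      have key1 : (2*(l:ℤ)+2*(e0:ℤ)-1)*(2*(l:ℤ)+2*(e0:ℤ)-1-1)
          + 2*((1:ℤ)-1)*(3*(c:ℤ)-2*(e0:ℤ)+1)
          - (2*(l:ℤ)-1)*(2*(l:ℤ)-2) = (4*(l:ℤ)+2*(e0:ℤ)-3)*(2*(e0:ℤ)) := by ring
      linarith [hleft, gch1, key1]
    · right
      rw [gP, gy, hE]
      rw [hnz] at gch2 gch3 ⊢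
      have key2 : (2*(l:ℤ)+3*(c:ℤ))*(2*(l:ℤ)+3*(c:ℤ)-1)
          - ((l:ℤ)+3*(c:ℤ)+1-(e0:ℤ))*((l:ℤ)+3*(c:ℤ)-(e0:ℤ))
          + ((2*(l:ℤ)+3*(c:ℤ))+1-(l:ℤ))*((2*(l:ℤ)+3*(c:ℤ))-(l:ℤ))
          - (2*(l:ℤ)+3*(c:ℤ))*((2*(l:ℤ)+3*(c:ℤ))-1)
          = (2*(l:ℤ)+6*(c:ℤ)-(e0:ℤ)+1)*(e0:ℤ) := by ring
      linarith [hright, gch2, gch3, key2]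
  · -- odd case
    obtain ⟨k, hk⟩ := hodd
    rcases hcase with hnot1 | ⟨i, hiIcc, hnot⟩
    · -- {1, 2l+d} missing
      left
      have hit : 1 < 2*l+d := by omega
      have hbound := layer2_bound hF hsh le_rfl hit hnot1
      have hch := two_mul_choose_two (2*l+d-1)
      have h2 : 2*L ≤ (2*l+d-1)*(2*l+d-1-1) := by
        have : (1-1)*(n+1-(2*l+d)) = 0 := by omega
        omega
      have h3 := (Nat.cast_le (α := ℤ)).mpr h2
      push_cast at h3
      rw [show ((2*l+d-1 : ℕ) : ℤ) = 2*(l:ℤ)+(d:ℤ)-1 by omega,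
        show ((2*l+d-1-1 : ℕ) : ℤ) = 2*(l:ℤ)+(d:ℤ)-2 by omega] at h3
      rw [gP', gy]
      have key3 : (2*(l:ℤ)+(d:ℤ)-1)*(2*(l:ℤ)+(d:ℤ)-2) - (2*(l:ℤ)-1)*(2*(l:ℤ)-2)
          = (4*(l:ℤ)+(d:ℤ)-3)*(d:ℤ) := by ring
      linarith [h3, gch1, key3]
    · -- i ∈ [3, l + (d+1)/2]
      rw [Finset.mem_Icc] at hiIcc
      obtain ⟨e0, he0def⟩ : ∃ e0, e0 = (d+1)/2 := ⟨(d+1)/2, rfl⟩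
      have he0 : d = 2*e0 - 1 ∧ 1 ≤ e0 := by omega
      have hie : i ≤ l + e0 := by omega
      have hit : i < 2*l+d+2-i := by omega
      have hbound := layer2_bound hF hsh (by omega) hit hnot
      have hch := two_mul_choose_two (2*l+d+2-i-1)
      have h2 : 2*L ≤ (2*l+d+2-i-1)*(2*l+d+2-i-1-1)
          + 2*((i-1)*(n+1-(2*l+d+2-i))) := by omega
      have h3 := (Nat.cast_le (α := ℤ)).mpr h2
      push_cast at h3
      rw [show ((2*l+d+2-i-1 : ℕ) : ℤ) = 2*(l:ℤ)+2*(e0:ℤ)-(i:ℤ) by omega,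
        show ((2*l+d+2-i-1-1 : ℕ) : ℤ) = 2*(l:ℤ)+2*(e0:ℤ)-(i:ℤ)-1 by omega,
        show ((i-1 : ℕ) : ℤ) = (i:ℤ)-1 by omega,
        show ((n+1-(2*l+d+2-i) : ℕ) : ℤ) = 3*(c:ℤ)-2*(e0:ℤ)+(i:ℤ) by omega] at h3
      have hdisj := convex_bound (l:ℤ) (c:ℤ) (e0:ℤ) (i:ℤ) 3 (L:ℤ) (by omega)
        (by exact_mod_cast hiIcc.1) (by exact_mod_cast hie) (by linarith)
      have hdz : (d:ℤ) = 2*(e0:ℤ) - 1 := by omega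
      have hE : ((d:ℤ)+1)/2 = (e0:ℤ) := by omega
      rcases hdisj with hleft | hright
      · have hdich := f3_dichot (l:ℤ) (c:ℤ) (e0:ℤ) (by exact_mod_cast hl0)
          (by exact_mod_cast hc0) (by exact_mod_cast he0.2) (by omega) (by omega)
        rcases hdich with hA | hT
        · left
          rw [gP', gy, hdz]
          have key4 : (2*(l:ℤ)+2*(e0:ℤ)-2)*(2*(l:ℤ)+2*(e0:ℤ)-3)
              - (2*(l:ℤ)-1)*(2*(l:ℤ)-2)
              = (4*(l:ℤ)+(2*(e0:ℤ)-1)-3)*(2*(e0:ℤ)-1) := by ring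
          linarith [hleft, hA, gch1, key4]
        · right
          rw [gP, gy, hE]
          rw [hnz] at gch2 gch3 ⊢
          have key2 : (2*(l:ℤ)+3*(c:ℤ))*(2*(l:ℤ)+3*(c:ℤ)-1)
              - ((l:ℤ)+3*(c:ℤ)+1-(e0:ℤ))*((l:ℤ)+3*(c:ℤ)-(e0:ℤ))
              + ((2*(l:ℤ)+3*(c:ℤ))+1-(l:ℤ))*((2*(l:ℤ)+3*(c:ℤ))-(l:ℤ))
              - (2*(l:ℤ)+3*(c:ℤ))*((2*(l:ℤ)+3*(c:ℤ))-1)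
              = (2*(l:ℤ)+6*(c:ℤ)-(e0:ℤ)+1)*(e0:ℤ) := by ring
          linarith [hleft, hT, gch2, gch3, key2]
      · right
        rw [gP, gy, hE]
        rw [hnz] at gch2 gch3 ⊢
        have key2 : (2*(l:ℤ)+3*(c:ℤ))*(2*(l:ℤ)+3*(c:ℤ)-1)
            - ((l:ℤ)+3*(c:ℤ)+1-(e0:ℤ))*((l:ℤ)+3*(c:ℤ)-(e0:ℤ))
            + ((2*(l:ℤ)+3*(c:ℤ))+1-(l:ℤ))*((2*(l:ℤ)+3*(c:ℤ))-(l:ℤ))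
            - (2*(l:ℤ)+3*(c:ℤ))*((2*(l:ℤ)+3*(c:ℤ))-1)
            = (2*(l:ℤ)+6*(c:ℤ)-(e0:ℤ)+1)*(e0:ℤ) := by ring
        linarith [hright, gch2, gch3, key2]
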